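/- Let G be a finite group and χ the character of an irreducible complex representation of G of dimension d. Then for all w ∈ G: Σ_{x ∈ G} Σ_{y ∈ G} χ([x,y] · w) = (|G| / d)^2 · χ(w), where [x,y] = x y x^{-1} y^{-1}. -/

import Mathlib

open CategoryTheory
open scoped commutatorElement

section Aux
variable {G : Type} [Group G] [Fintype G]

lemma char_one_ne_zero (V : FDRep ℂ G) (hV : Simple V) : V.character 1 ≠ 0 := by
  haveI := hV
  rw [FDRep.char_one]
  simp only [ne_eq, Nat.cast_eq_zero]
  intro h0
  have hsub : Subsingleton V := Module.finrank_zero_iff.mp h0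
  apply id_nonzero V
  ext v
  exact @Subsingleton.elim _ hsub _ _

/-- Scalar from a `G`-equivariant endomorphism built from a class-function-weighted sum. -/
lemma scalar_of_comm (V : FDRep ℂ G) (hV : Simple V) (S : Module.End ℂ V)
    (hS : ∀ h : G, S * V.ρ h = V.ρ h * S) :
    ∃ c : ℂ, (c • (1 : Module.End ℂ V)) = S := by
  haveI := hV
  let T : V ⟶ V := ⟨FGModuleCat.ofHom S, fun h => by
    ext x; exact LinearMap.congr_fun (hS h) x⟩
  obtain ⟨c, hc⟩ := endomorphism_simple_eq_smul_id ℂ T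
  refine ⟨c, ?_⟩
  ext v
  have := congrArg (fun f : V ⟶ V => f.hom.hom.hom v) hc
  exact this

lemma trace_scalar (V : FDRep ℂ G) (c : ℂ) (u : G)
    (S : Module.End ℂ V) (h : (c • (1 : Module.End ℂ V)) = S) :
    LinearMap.trace ℂ V (S * V.ρ u) = c * V.character u := by
  rw [← h, smul_mul_assoc, one_mul, map_smul]
  rfl

lemma key_lemma (V : FDRep ℂ G) (hV : Simple V) (g u : G) :
    ∑ x : G, V.character (x * g * x⁻¹ * u) =
      (Fintype.card G : ℂ) * V.character g / V.character 1 * V.character u := by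
  have hcomm : ∀ h : G, (∑ x : G, V.ρ (x * g * x⁻¹)) * V.ρ h
      = V.ρ h * (∑ x : G, V.ρ (x * g * x⁻¹)) := by
    intro h
    rw [Finset.sum_mul, Finset.mul_sum]
    rw [← Equiv.sum_comp (Equiv.mulLeft h) (fun x => V.ρ (x * g * x⁻¹) * V.ρ h)]
    refine Finset.sum_congr rfl fun x _ => ?_
    rw [← map_mul, ← map_mul, Equiv.coe_mulLeft]
    congr 1
    group
  obtain ⟨c, hc⟩ := scalar_of_comm V hV _ hcomm
  have key : ∀ v : G, ∑ x : G, V.character (x * g * x⁻¹ * v) = c * V.character v := by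
    intro v
    rw [← trace_scalar V c v _ hc, Finset.sum_mul, map_sum]
    refine Finset.sum_congr rfl fun x _ => ?_
    rw [← map_mul]
    rfl
  have hcval : c = (Fintype.card G : ℂ) * V.character g / V.character 1 := by
    have h1 := key 1
    simp only [mul_one] at h1
    have : ∑ x : G, V.character (x * g * x⁻¹) = (Fintype.card G : ℂ) * V.character g := by
      rw [Finset.sum_congr rfl fun x _ => FDRep.char_conj V g x]
      simp [Finset.sum_const, mul_comm]
    rw [this] at h1
    rw [eq_div_iff (char_one_ne_zero V hV)]
    linear_combination -h1
  rw [← hcval]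
  exact key u

end Aux

section Aux2
variable {G : Type} [Group G] [Fintype G]

lemma key_lemma2 (V : FDRep ℂ G) (hV : Simple V) (w : G) :
    ∑ y : G, V.character y * V.character (y⁻¹ * w) =
      (Fintype.card G : ℂ) / V.character 1 * V.character w := by
  haveI := hV
  set S : Module.End ℂ V := ∑ y : G, V.character y • V.ρ y⁻¹ with hSdef
  have hcomm : ∀ h : G, S * V.ρ h = V.ρ h * S := by
    intro h
    rw [hSdef, Finset.sum_mul, Finset.mul_sum]
    rw [← Equiv.sum_comp (MulAut.conj h).toEquiv
      (fun y => (V.character y • V.ρ y⁻¹) * V.ρ h)]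
    refine Finset.sum_congr rfl fun y _ => ?_
    simp only [MulAut.conj_apply, MulEquiv.toEquiv_eq_coe, EquivLike.coe_coe]
    rw [FDRep.char_conj, smul_mul_assoc, mul_smul_comm, ← map_mul, ← map_mul]
    congr 2
    group
  obtain ⟨c, hc⟩ := scalar_of_comm V hV S hcomm
  have key : ∀ v : G, ∑ y : G, V.character y * V.character (y⁻¹ * v)
      = c * V.character v := by
    intro v
    rw [← trace_scalar V c v S hc, hSdef, Finset.sum_mul, map_sum]
    refine Finset.sum_congr rfl fun y _ => ?_
    rw [smul_mul_assoc, map_smul, ← map_mul, smul_eq_mul]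
    rfl
  have hne : (Fintype.card G : ℂ) ≠ 0 := Nat.cast_ne_zero.mpr Fintype.card_ne_zero
  have horth := FDRep.char_orthonormal (k := ℂ) (G := G) V V
  rw [if_pos ⟨Iso.refl V⟩, Nat.card_eq_fintype_card] at horth
  have hsum : ∑ y : G, V.character y * V.character y⁻¹ = (Fintype.card G : ℂ) := by
    have h2 := (inv_mul_eq_one₀ hne).mp (by simpa using horth)
    exact h2.symm
  have hcval : c = (Fintype.card G : ℂ) / V.character 1 := by
    have h1 := key 1
    simp only [mul_one] at h1
    rw [hsum] at h1
    rw [eq_div_iff (char_one_ne_zero V hV)]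
    linear_combination -h1
  rw [← hcval]
  exact key w

end Aux2


/-- Commutator character relation: for an irreducible complex character χ of a finite group G
with dimension d = χ(e), we have Σ_{x,y ∈ G} χ([x,y] w) = (|G|/d)² χ(w). -/
theorem character_commutator_sum {G : Type} [Group G] [Fintype G]
    (V : FDRep ℂ G) (hV : Simple V) (w : G) :
    ∑ x : G, ∑ y : G, V.character (⁅x, y⁆ * w) =
      ((Fintype.card G : ℂ) / V.character 1) ^ 2 * V.character w := by
  rw [Finset.sum_comm]
  have step1 : ∀ y : G, ∑ x : G, V.character (⁅x, y⁆ * w)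
      = (Fintype.card G : ℂ) * V.character y / V.character 1
        * V.character (y⁻¹ * w) := by
    intro y
    rw [← key_lemma V hV y (y⁻¹ * w)]
    refine Finset.sum_congr rfl fun x _ => ?_
    congr 1
    rw [commutatorElement_def]
    group
  rw [Finset.sum_congr rfl fun y _ => step1 y]
  have : ∀ y : G, (Fintype.card G : ℂ) * V.character y / V.character 1
      * V.character (y⁻¹ * w)
      = (Fintype.card G : ℂ) / V.character 1
        * (V.character y * V.character (y⁻¹ * w)) := fun y => by ring
  rw [Finset.sum_congr rfl fun y _ => this y, ← Finset.mul_sum,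
    key_lemma2 V hV w]
  ring
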